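/- For fixed u, v ∈ ℝ, the function z ↦ φ(u, v, z) (the Siegel phi-function in its third argument) is holomorphic on the open upper half-plane {z ∈ ℂ : Im z > 0}. -/

import Mathlib

open Complex Real

/-- The Siegel phi-function: for `u v : ℝ` and `z` in the upper half-plane, with
`γ = u·z + v`,
`φ(u,v,z) = -i·e^{πiz/6}·e^{πiuγ}·(e^{πiγ} - e^{-πiγ})·∏_{n≥1}(1-e^{2πi(nz+γ)})(1-e^{2πi(nz-γ)})`. -/
noncomputable def siegelPhi (u v : ℝ) (z : ℂ) : ℂ :=
  -I * Complex.exp ((π : ℂ) * I * z / 6) *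
    Complex.exp ((π : ℂ) * I * (u : ℂ) * ((u : ℂ) * z + (v : ℂ))) *
    (Complex.exp ((π : ℂ) * I * ((u : ℂ) * z + (v : ℂ))) -
      Complex.exp (-((π : ℂ) * I * ((u : ℂ) * z + (v : ℂ))))) *
    ∏' n : ℕ+,
      (1 - Complex.exp (2 * (π : ℂ) * I * ((n : ℂ) * z + ((u : ℂ) * z + (v : ℂ))))) *
      (1 - Complex.exp (2 * (π : ℂ) * I * ((n : ℂ) * z - ((u : ℂ) * z + (v : ℂ)))))

open Filter Finset in
private lemma aux_norm_exp {c s t A : ℝ} (hc : 0 < c) {z : ℂ} (hz : c ≤ z.im)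
    (hA : 0 ≤ A) (hAs : A ≤ s) :
    ‖Complex.exp (2 * (π : ℂ) * I * ((s : ℂ) * z + (t : ℂ)))‖ ≤ Real.exp (-(2 * π * c) * A) := by
  rw [Complex.norm_exp, Real.exp_le_exp]
  have hre : (2 * (π : ℂ) * I * ((s : ℂ) * z + (t : ℂ))).re = -(2 * π * (s * z.im)) := by
    simp [Complex.mul_re, Complex.mul_im]
  rw [hre]
  have hπ : (0:ℝ) < π := Real.pi_pos
  nlinarith [mul_le_mul hAs hz hc.le (le_trans hA hAs)]

private lemma aux_prod_sub_one {q1 q2 : ℂ} {e : ℝ} (h1 : ‖q1‖ ≤ e) (h2 : ‖q2‖ ≤ e)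
    (he : e ≤ 1) : ‖(1 - q1) * (1 - q2) - 1‖ ≤ 3 * e := by
  have hrw : (1 - q1) * (1 - q2) - 1 = -q1 + (-q2 + q1 * q2) := by ring
  rw [hrw]
  have h0 : (0:ℝ) ≤ e := le_trans (norm_nonneg q1) h1
  calc ‖-q1 + (-q2 + q1 * q2)‖ ≤ ‖q1‖ + (‖q2‖ + ‖q1‖ * ‖q2‖) := by
        refine le_trans (norm_add_le _ _) ?_
        rw [norm_neg]
        gcongr
        refine le_trans (norm_add_le _ _) ?_
        rw [norm_neg, norm_mul]
    _ ≤ e + (e + e * e) := by gcongr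
    _ ≤ 3 * e := by nlinarith

private lemma aux_one_sub_ne {q : ℂ} (h : ‖q‖ < 1) : 1 - q ≠ 0 := by
  intro h0
  have : q = 1 := by linear_combination -h0
  rw [this] at h
  simp at h

private lemma aux_slit {x : ℂ} (h : ‖x - 1‖ < 1) : x ∈ Complex.slitPlane := by
  refine Or.inl ?_
  have h1 : |(x - 1).re| ≤ ‖x - 1‖ := by
    exact Complex.abs_re_le_norm _
  have h2 : (x - 1).re = x.re - 1 := by simp
  rw [h2] at h1
  have := abs_le.mp h1
  linarith [this.1]

private noncomputable def hterm (u v : ℝ) (m : ℕ) (z : ℂ) : ℂ :=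
  (1 - Complex.exp (2 * (π : ℂ) * I * (((m : ℂ) + 1) * z + ((u : ℂ) * z + (v : ℂ))))) *
  (1 - Complex.exp (2 * (π : ℂ) * I * (((m : ℂ) + 1) * z - ((u : ℂ) * z + (v : ℂ)))))

private lemma hterm_differentiable (u v : ℝ) (m : ℕ) : Differentiable ℂ (hterm u v m) := by
  unfold hterm
  fun_prop

private lemma hterm_q1 {u v c : ℝ} (hc : 0 < c) {m : ℕ} {z : ℂ} (hz : c ≤ z.im)
    (hm : |u| ≤ (m : ℝ)) :
    ‖Complex.exp (2 * (π : ℂ) * I * (((m : ℂ) + 1) * z + ((u : ℂ) * z + (v : ℂ))))‖ ≤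
      Real.exp (-(2 * π * c) * ((m : ℝ) + 1 - |u|)) := by
  have hrw : 2 * (π : ℂ) * I * (((m : ℂ) + 1) * z + ((u : ℂ) * z + (v : ℂ))) =
      2 * (π : ℂ) * I * ((((m : ℝ) + 1 + u : ℝ) : ℂ) * z + ((v : ℝ) : ℂ)) := by
    push_cast; ring
  rw [hrw]
  exact aux_norm_exp hc hz (by linarith [abs_nonneg u]) (by linarith [neg_abs_le u])

private lemma hterm_q2 {u v c : ℝ} (hc : 0 < c) {m : ℕ} {z : ℂ} (hz : c ≤ z.im)
    (hm : |u| ≤ (m : ℝ)) :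
    ‖Complex.exp (2 * (π : ℂ) * I * (((m : ℂ) + 1) * z - ((u : ℂ) * z + (v : ℂ))))‖ ≤
      Real.exp (-(2 * π * c) * ((m : ℝ) + 1 - |u|)) := by
  have hrw : 2 * (π : ℂ) * I * (((m : ℂ) + 1) * z - ((u : ℂ) * z + (v : ℂ))) =
      2 * (π : ℂ) * I * ((((m : ℝ) + 1 - u : ℝ) : ℂ) * z + ((-v : ℝ) : ℂ)) := by
    push_cast; ring
  rw [hrw]
  exact aux_norm_exp hc hz (by linarith [abs_nonneg u]) (by linarith [le_abs_self u])

set_option maxHeartbeats 1000000 in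
open Filter Finset in
private lemma tprod_diff (u v : ℝ) :
    DifferentiableOn ℂ (fun z : ℂ => ∏' n : ℕ+,
      (1 - Complex.exp (2 * (π : ℂ) * I * ((n : ℂ) * z + ((u : ℂ) * z + (v : ℂ))))) *
      (1 - Complex.exp (2 * (π : ℂ) * I * ((n : ℂ) * z - ((u : ℂ) * z + (v : ℂ))))))
      {z : ℂ | 0 < z.im} := by
  intro z₀ hz₀
  have hz₀' : 0 < z₀.im := hz₀
  refine DifferentiableAt.differentiableWithinAt ?_
  set c : ℝ := z₀.im / 2 with hcdef
  have hc : 0 < c := by positivity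
  set ε : ℕ → ℝ := fun m => Real.exp (-(2 * π * c) * ((m : ℝ) + 1 - |u|)) with hεdef
  have hεpos : ∀ m, 0 < ε m := fun m => Real.exp_pos _
  -- summability of ε
  have hsum : Summable ε := by
    have hr : Real.exp (-(2 * π * c)) < 1 := by
      rw [Real.exp_lt_one_iff]
      have := Real.pi_pos
      nlinarith
    have hgeo : Summable (fun m : ℕ => Real.exp (-(2 * π * c) * (1 - |u|)) *
        Real.exp (-(2 * π * c)) ^ m) :=
      (summable_geometric_of_lt_one (Real.exp_pos _).le hr).mul_left _
    refine hgeo.congr fun m => ?_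
    rw [← Real.exp_nat_mul, ← Real.exp_add]
    congr 1
    ring
  -- choose N
  obtain ⟨N, hN⟩ : ∃ N : ℕ, ∀ m ≥ N, |u| ≤ (m : ℝ) ∧ ε m ≤ 1 / 8 := by
    have h1 : ∀ᶠ m : ℕ in atTop, |u| ≤ (m : ℝ) :=
      (tendsto_natCast_atTop_atTop (R := ℝ)).eventually_ge_atTop |u|
    have h2 : ∀ᶠ m : ℕ in atTop, ε m ≤ 1 / 8 :=
      (hsum.tendsto_atTop_zero).eventually_le_const (by norm_num)
    exact eventually_atTop.mp (h1.and h2)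
  set U : Set ℂ := {z : ℂ | c < z.im} with hUdef
  have hU : IsOpen U := isOpen_lt continuous_const Complex.continuous_im
  have hz₀U : z₀ ∈ U := by
    simp only [hUdef, Set.mem_setOf_eq, hcdef]
    linarith
  -- basic bounds on U for indices ≥ N
  have hkey : ∀ m, N ≤ m → ∀ z ∈ U, ‖hterm u v m z - 1‖ ≤ 3 * ε m ∧ hterm u v m z ≠ 0 := by
    intro m hm z hz
    obtain ⟨hmu, hε8⟩ := hN m hm
    have hzc : c ≤ z.im := le_of_lt hz
    have hq1 := hterm_q1 (u := u) (v := v) hc hzc hmu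
    have hq2 := hterm_q2 (u := u) (v := v) hc hzc hmu
    constructor
    · exact aux_prod_sub_one hq1 hq2 (by linarith)
    · exact mul_ne_zero (aux_one_sub_ne (by linarith)) (aux_one_sub_ne (by linarith))
  have hlogb : ∀ m : ℕ, ∀ z ∈ U, ‖Complex.log (hterm u v (m + N) z)‖ ≤ 9 / 2 * ε (m + N) := by
    intro m z hz
    obtain ⟨hb, hne⟩ := hkey (m + N) (Nat.le_add_left N m) z hz
    have hε8 : ε (m + N) ≤ 1 / 8 := (hN (m + N) (Nat.le_add_left N m)).2
    have h12 : ‖hterm u v (m + N) z - 1‖ ≤ 1 / 2 := by linarith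
    have := Complex.norm_log_one_add_half_le_self (z := hterm u v (m + N) z - 1) h12
    rw [show (1 : ℂ) + (hterm u v (m + N) z - 1) = hterm u v (m + N) z by ring] at this
    calc ‖Complex.log (hterm u v (m + N) z)‖ ≤ 3 / 2 * ‖hterm u v (m + N) z - 1‖ := this
      _ ≤ 3 / 2 * (3 * ε (m + N)) := by gcongr
      _ = 9 / 2 * ε (m + N) := by ring
  -- the log-sum is differentiable on U
  have hsum' : Summable (fun m : ℕ => 9 / 2 * ε (m + N)) :=
    (((summable_nat_add_iff N).mpr hsum).mul_left _)
  have hlogdiff : DifferentiableOn ℂ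
      (fun z : ℂ => ∑' m : ℕ, Complex.log (hterm u v (m + N) z)) U := by
    refine differentiableOn_tsum_of_summable_norm hsum' ?_ hU fun m w hw => hlogb m w hw
    intro m z hz
    refine DifferentiableAt.differentiableWithinAt ?_
    refine ((hterm_differentiable u v (m + N)).differentiableAt).clog ?_
    have hb := (hkey (m + N) (Nat.le_add_left N m) z hz).1
    have hε8 : ε (m + N) ≤ 1 / 8 := (hN (m + N) (Nat.le_add_left N m)).2
    exact aux_slit (by linarith)
  -- pointwise identity on U
  have hEq : ∀ z ∈ U, (∏' n : ℕ+,
      (1 - Complex.exp (2 * (π : ℂ) * I * ((n : ℂ) * z + ((u : ℂ) * z + (v : ℂ))))) *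
      (1 - Complex.exp (2 * (π : ℂ) * I * ((n : ℂ) * z - ((u : ℂ) * z + (v : ℂ)))))) =
      (∏ i ∈ Finset.range N, hterm u v i z) *
        Complex.exp (∑' m : ℕ, Complex.log (hterm u v (m + N) z)) := by
    intro z hz
    have hne : ∀ m : ℕ, hterm u v (m + N) z ≠ 0 :=
      fun m => (hkey (m + N) (Nat.le_add_left N m) z hz).2
    have hlogsum : Summable fun m : ℕ => Complex.log (hterm u v (m + N) z) :=
      Summable.of_norm_bounded hsum' fun m => hlogb m z hz
    have hps : HasProd (fun m : ℕ => hterm u v (m + N) z)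
        (Complex.exp (∑' m : ℕ, Complex.log (hterm u v (m + N) z))) := by
      have h := hlogsum.hasSum.cexp
      rwa [show cexp ∘ (fun m : ℕ => Complex.log (hterm u v (m + N) z)) =
        fun m : ℕ => hterm u v (m + N) z from funext fun m => Complex.exp_log (hne m)] at h
    have hmul : Multipliable (fun m : ℕ => hterm u v (m + N) z) := ⟨_, hps⟩
    have hreindex : (∏' m : ℕ, hterm u v m z) = ∏' n : ℕ+,
        (1 - Complex.exp (2 * (π : ℂ) * I * ((n : ℂ) * z + ((u : ℂ) * z + (v : ℂ))))) *
        (1 - Complex.exp (2 * (π : ℂ) * I * ((n : ℂ) * z - ((u : ℂ) * z + (v : ℂ))))) := by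
      have := Equiv.pnatEquivNat.symm.tprod_eq (fun n : ℕ+ =>
        (1 - Complex.exp (2 * (π : ℂ) * I * ((n : ℂ) * z + ((u : ℂ) * z + (v : ℂ))))) *
        (1 - Complex.exp (2 * (π : ℂ) * I * ((n : ℂ) * z - ((u : ℂ) * z + (v : ℂ))))))
      rw [← this]
      refine tprod_congr fun m => ?_
      have hcast : ((Equiv.pnatEquivNat.symm m : ℕ+) : ℕ) = m + 1 := rfl
      simp only [hterm, hcast]
      push_cast
      ring_nf
    rw [← hreindex]
    rw [← Multipliable.prod_mul_tprod_nat_mul' hmul]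
    rw [hps.tprod_eq]
  -- conclude
  have hF : DifferentiableAt ℂ (fun z : ℂ => (∏ i ∈ Finset.range N, hterm u v i z) *
      Complex.exp (∑' m : ℕ, Complex.log (hterm u v (m + N) z))) z₀ := by
    refine DifferentiableAt.mul ?_ ?_
    · exact DifferentiableAt.fun_finsetProd fun i _ => (hterm_differentiable u v i).differentiableAt
    · exact (hlogdiff.differentiableAt (hU.mem_nhds hz₀U)).cexp
  refine hF.congr_of_eventuallyEq ?_
  filter_upwards [hU.mem_nhds hz₀U] with z hz using hEq z hz

/-- For fixed `u v : ℝ`, `z ↦ φ(u,v,z)` is holomorphic on the open upper half-plane. -/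
theorem siegelPhi_differentiableOn (u v : ℝ) :
    DifferentiableOn ℂ (fun z : ℂ => siegelPhi u v z) {z : ℂ | 0 < z.im} := by
  unfold siegelPhi
  refine DifferentiableOn.mul (Differentiable.differentiableOn ?_) (tprod_diff u v)
  fun_prop
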